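/- Let A and B be exact categories with B weakly idempotent complete, and let f : A → B be a left exact functor (i.e., f sends every admissible short exact sequence X ↣ Y ↠ Z to a sequence where f(X) → f(Y) is an admissible monic with cokernel mapping admissibly onto an image of f(Y) → f(Z), in the dual sense of right exactness). Then the class S_f of admissible short exact sequences η of A such that f(η) is admissible exact in B is an exact structure on A. -/

import Mathlib

open CategoryTheory CategoryTheory.Limits

universe v u v' u'

/-- A Quillen exact structure on an additive category `C`: a class of kernel–cokernel pairs
(encoded as short complexes) containing the split ones, closed under isomorphism, with
inflations and deflations closed under composition, and admitting pushouts along arbitrary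
morphisms out of the first term and pullbacks along arbitrary morphisms into the third
term, which again belong to the class. -/
structure ExactStructure (C : Type u) [Category.{v} C] [Preadditive C]
    [HasBinaryBiproducts C] where
  sequences : Set (ShortComplex C)
  isKernel : ∀ S ∈ sequences, Nonempty (IsLimit (KernelFork.ofι S.f S.zero))
  isCokernel : ∀ S ∈ sequences, Nonempty (IsColimit (CokernelCofork.ofπ S.g S.zero))
  iso_closed : ∀ S ∈ sequences, ∀ S' : ShortComplex C, (S ≅ S') → S' ∈ sequences
  split_mem : ∀ X Y : C,
    ShortComplex.mk (biprod.inl : X ⟶ X ⊞ Y) (biprod.snd : X ⊞ Y ⟶ Y) (by simp) ∈ sequences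
  infl_comp : ∀ {X Y Z : C} (f : X ⟶ Y) (g : Y ⟶ Z),
    (∃ (W : C) (q : Y ⟶ W) (w : f ≫ q = 0), ShortComplex.mk f q w ∈ sequences) →
    (∃ (W : C) (q : Z ⟶ W) (w : g ≫ q = 0), ShortComplex.mk g q w ∈ sequences) →
    (∃ (W : C) (q : Z ⟶ W) (w : (f ≫ g) ≫ q = 0), ShortComplex.mk (f ≫ g) q w ∈ sequences)
  defl_comp : ∀ {X Y Z : C} (f : X ⟶ Y) (g : Y ⟶ Z),
    (∃ (W : C) (i : W ⟶ X) (w : i ≫ f = 0), ShortComplex.mk i f w ∈ sequences) →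
    (∃ (W : C) (i : W ⟶ Y) (w : i ≫ g = 0), ShortComplex.mk i g w ∈ sequences) →
    (∃ (W : C) (i : W ⟶ X) (w : i ≫ (f ≫ g) = 0), ShortComplex.mk i (f ≫ g) w ∈ sequences)
  pushout_ex : ∀ S ∈ sequences, ∀ (A : C) (a : S.X₁ ⟶ A),
    ∃ S' ∈ sequences, ∃ (φ : S ⟶ S') (e : A ≅ S'.X₁),
      φ.τ₁ = a ≫ e.hom ∧ IsIso φ.τ₃ ∧ IsPushout S.f φ.τ₁ φ.τ₂ S'.f
  pullback_ex : ∀ S ∈ sequences, ∀ (A : C) (c : A ⟶ S.X₃),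
    ∃ S' ∈ sequences, ∃ (φ : S' ⟶ S) (e : S'.X₃ ≅ A),
      φ.τ₃ = e.hom ≫ c ∧ IsIso φ.τ₁ ∧ IsPullback S'.g φ.τ₂ φ.τ₃ S.g

section Aux

variable {C : Type u} [Category.{v} C] [Preadditive C] [HasBinaryBiproducts C]

/-- `g` is an admissible epimorphism (deflation) for the exact structure `E`. -/
def ExactStructure.IsDefl (E : ExactStructure C) {X Y : C} (g : X ⟶ Y) : Prop :=
  ∃ (K : C) (i : K ⟶ X) (w : i ≫ g = 0), ShortComplex.mk i g w ∈ E.sequences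

namespace ExactStructure

variable (E : ExactStructure C)

lemma epi_g {S : ShortComplex C} (hS : S ∈ E.sequences) : Epi S.g := by
  obtain ⟨hc⟩ := E.isCokernel S hS
  exact ⟨fun a b h => Cofork.IsColimit.hom_ext hc (by simpa using h)⟩

lemma mono_f {S : ShortComplex C} (hS : S ∈ E.sequences) : Mono S.f := by
  obtain ⟨hk⟩ := E.isKernel S hS
  exact ⟨fun a b h => Fork.IsLimit.hom_ext hk (by simpa using h)⟩

lemma mem_defl {S : ShortComplex C} (hS : S ∈ E.sequences) : E.IsDefl S.g :=
  ⟨S.X₁, S.f, S.zero, hS⟩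

lemma IsDefl.comp {E : ExactStructure C} {X Y Z : C} {g : X ⟶ Y} {h : Y ⟶ Z} (hg : E.IsDefl g) (hh : E.IsDefl h) :
    E.IsDefl (g ≫ h) := by
  obtain ⟨K, i, w, hK⟩ := hg
  obtain ⟨L, i', w', hL⟩ := hh
  exact E.defl_comp g h ⟨K, i, w, hK⟩ ⟨L, i', w', hL⟩

lemma IsDefl.comp_isIso {E : ExactStructure C} {X Y Z : C} {g : X ⟶ Y} (hg : E.IsDefl g) (v : Y ⟶ Z) [IsIso v] :
    E.IsDefl (g ≫ v) := by
  obtain ⟨K, i, w, hK⟩ := hg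
  refine ⟨K, i, by rw [← Category.assoc, w, zero_comp], E.iso_closed _ hK _ ?_⟩
  exact ShortComplex.isoMk (Iso.refl _) (Iso.refl _) (asIso v) (by simp) (by simp)

lemma IsDefl.isIso_comp {E : ExactStructure C} {W X Y : C} {g : X ⟶ Y} (hg : E.IsDefl g) (u : W ⟶ X) [IsIso u] :
    E.IsDefl (u ≫ g) := by
  obtain ⟨K, i, w, hK⟩ := hg
  refine ⟨K, i ≫ inv u, by rw [Category.assoc, IsIso.inv_hom_id_assoc, w],
    E.iso_closed _ hK _ ?_⟩
  exact ShortComplex.isoMk (Iso.refl _) (asIso u).symm (Iso.refl _) (by simp) (by simp)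

lemma isIso_of_mono_of_isDefl {X Y : C} (g : X ⟶ Y) (hg : E.IsDefl g) [Mono g] : IsIso g := by
  obtain ⟨V, v, w, hV⟩ := hg
  have hv : v = 0 := by
    rw [← cancel_mono g, w, zero_comp]
  obtain ⟨hc⟩ := E.isCokernel _ hV
  have hepi : Epi g := E.epi_g hV
  obtain ⟨u, hu⟩ := CokernelCofork.IsColimit.desc' hc (𝟙 X)
    (show v ≫ 𝟙 X = 0 by rw [hv, zero_comp])
  simp only [Cofork.π_ofπ] at hu
  haveI : IsSplitMono g := ⟨⟨⟨u, hu⟩⟩⟩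
  exact isIso_of_epi_of_isSplitMono g

/-- `biprod.desc (𝟙 Q) x` is a deflation. -/
lemma isDefl_desc_one {Q Y : C} (x : Y ⟶ Q) :
    E.IsDefl (biprod.desc (𝟙 Q) x : Q ⊞ Y ⟶ Q) := by
  refine ⟨Y, biprod.lift (-x) (𝟙 Y), by simp, ?_⟩
  refine E.iso_closed _ (E.split_mem Y Q) _ ?_
  refine ShortComplex.isoMk (Iso.refl _)
    (⟨biprod.desc (biprod.lift (-x) (𝟙 Y)) biprod.inl,
      biprod.desc biprod.inr (biprod.lift (𝟙 Y) x), ?_, ?_⟩ : Y ⊞ Q ≅ Q ⊞ Y)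
    (Iso.refl _) ?_ ?_
  · apply biprod.hom_ext' <;> apply biprod.hom_ext <;>
      simp [Preadditive.neg_comp, Preadditive.comp_neg]
  · apply biprod.hom_ext' <;> apply biprod.hom_ext <;>
      simp [Preadditive.neg_comp, Preadditive.comp_neg]
  · simp
  · apply biprod.hom_ext' <;> simp


/-- `biprod.map h (𝟙 B₀)` is a deflation when `h` is. -/
lemma isDefl_map_one {M Q : C} {h : M ⟶ Q} (hh : E.IsDefl h) (B₀ : C) :
    E.IsDefl (biprod.map h (𝟙 B₀) : M ⊞ B₀ ⟶ Q ⊞ B₀) := by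
  obtain ⟨K, k, w, hK⟩ := hh
  obtain ⟨S₁, hS₁, φ₁, ε, hτ₃, hτ₁, hpb⟩ :=
    E.pullback_ex _ hK (Q ⊞ B₀) (biprod.fst : Q ⊞ B₀ ⟶ Q)
  have w₁ : (biprod.map h (𝟙 B₀) ≫ ε.inv) ≫ φ₁.τ₃ = (biprod.fst : M ⊞ B₀ ⟶ M) ≫ h := by
    rw [hτ₃, Category.assoc, ε.inv_hom_id_assoc, biprod.map_fst]
  set ω₁ : M ⊞ B₀ ⟶ S₁.X₂ := hpb.lift (biprod.map h (𝟙 B₀) ≫ ε.inv) biprod.fst w₁ with hω₁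
  have hω₁g : ω₁ ≫ S₁.g = biprod.map h (𝟙 B₀) ≫ ε.inv := hpb.lift_fst _ _ _
  have hω₁τ : ω₁ ≫ φ₁.τ₂ = biprod.fst := hpb.lift_snd _ _ _
  set ω₂ : S₁.X₂ ⟶ M ⊞ B₀ := biprod.lift φ₁.τ₂ (S₁.g ≫ ε.hom ≫ biprod.snd) with hω₂
  have hmap : ω₂ ≫ biprod.map h (𝟙 B₀) = S₁.g ≫ ε.hom := by
    apply biprod.hom_ext
    · rw [Category.assoc, biprod.map_fst, hω₂, biprod.lift_fst_assoc, hpb.w.symm]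
      simp [hτ₃]
    · simp [hω₂]
  have h12 : ω₁ ≫ ω₂ = 𝟙 _ := by
    apply biprod.hom_ext
    · simp [hω₂, hω₁τ]
    · simp only [Category.assoc, hω₂, biprod.lift_snd, Category.id_comp]
      rw [← Category.assoc, hω₁g]
      simp
  have h21 : ω₂ ≫ ω₁ = 𝟙 _ := by
    apply hpb.hom_ext
    · rw [Category.assoc, hω₁g, ← Category.assoc, hmap]
      simp
    · rw [Category.assoc, hω₁τ, Category.id_comp, hω₂, biprod.lift_fst]
  haveI : IsIso ω₁ := ⟨ω₂, h12, h21⟩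
  have : E.IsDefl (ω₁ ≫ (S₁.g ≫ ε.hom)) :=
    ((E.mem_defl hS₁).comp_isIso ε.hom).isIso_comp ω₁
  have heq : ω₁ ≫ (S₁.g ≫ ε.hom) = biprod.map h (𝟙 B₀) := by
    rw [← Category.assoc, hω₁g]
    simp
  rwa [heq] at this

/-- `biprod.desc h x` is a deflation when `h` is. -/
lemma isDefl_desc {M Q Y : C} {h : M ⟶ Q} (hh : E.IsDefl h) (x : Y ⟶ Q) :
    E.IsDefl (biprod.desc h x : M ⊞ Y ⟶ Q) := by
  have heq : (biprod.desc h x : M ⊞ Y ⟶ Q)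
      = biprod.map h (𝟙 Y) ≫ biprod.desc (𝟙 Q) x := by
    apply biprod.hom_ext' <;> simp
  rw [heq]
  exact (E.isDefl_map_one hh Y).comp (E.isDefl_desc_one x)

/-- `biprod.desc x h` is a deflation when `h` is. -/
lemma isDefl_desc' {M Q Y : C} (x : Y ⟶ Q) {h : M ⟶ Q} (hh : E.IsDefl h) :
    E.IsDefl (biprod.desc x h : Y ⊞ M ⟶ Q) := by
  have heq : (biprod.desc x h : Y ⊞ M ⟶ Q)
      = (biprod.braiding Y M).hom ≫ biprod.desc h x := by
    apply biprod.hom_ext' <;> simp [biprod.braiding]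
  rw [heq]
  exact (E.isDefl_desc hh x).isIso_comp _



/-- Bühler's Proposition 7.6: in a weakly idempotent complete exact category, if a
composite `u ≫ g` is a deflation then so is `g`. -/
lemma isDefl_of_comp_isDefl
    (hB : ∀ ⦃X Y : C⦄ (r : X ⟶ Y) (s : Y ⟶ X), s ≫ r = 𝟙 Y → HasKernel r)
    {X Y Z : C} (u : X ⟶ Y) (g : Y ⟶ Z) (h : E.IsDefl (u ≫ g)) : E.IsDefl g := by
  -- `biprod.snd ≫ g` is a deflation
  have ht : E.IsDefl (biprod.desc (u ≫ g) g : X ⊞ Y ⟶ Z) := E.isDefl_desc h g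
  set Φ : X ⊞ Y ⟶ X ⊞ Y := 𝟙 _ - biprod.fst ≫ u ≫ biprod.inr with hΦdef
  haveI : IsIso Φ := by
    refine ⟨𝟙 _ + biprod.fst ≫ u ≫ biprod.inr, ?_, ?_⟩ <;>
    · simp only [hΦdef, Preadditive.sub_comp, Preadditive.comp_sub,
        Preadditive.add_comp, Preadditive.comp_add, Category.comp_id, Category.id_comp]
      rw [show (biprod.fst ≫ u ≫ biprod.inr) ≫ biprod.fst ≫ u ≫ biprod.inr = 0 by
        simp [biprod.inr_fst_assoc]]
      abel
  have hsnd : (biprod.snd : X ⊞ Y ⟶ Y) ≫ g = Φ ≫ biprod.desc (u ≫ g) g := by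
    apply biprod.hom_ext' <;>
      simp [hΦdef, Preadditive.sub_comp, Preadditive.comp_sub]
  have hd : E.IsDefl ((biprod.snd : X ⊞ Y ⟶ Y) ≫ g) := by
    rw [hsnd]; exact ht.isIso_comp Φ
  obtain ⟨K, k, wk, memk⟩ := hd
  obtain ⟨hk⟩ := E.isKernel _ memk
  obtain ⟨u₀, hu₀⟩ := KernelFork.IsLimit.lift' hk (biprod.inl : X ⟶ X ⊞ Y) (by simp)
  simp only [Fork.ι_ofι] at hu₀
  let u₁ : X ⟶ K := u₀
  have hu₁ : u₁ ≫ k = biprod.inl := hu₀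
  clear hu₀
  have hu₁r : u₁ ≫ k ≫ biprod.fst = 𝟙 X := by rw [← Category.assoc, hu₁]; simp
  haveI : HasKernel (k ≫ (biprod.fst : X ⊞ Y ⟶ X)) := hB _ u₁ hu₁r
  set ι : kernel (k ≫ biprod.fst) ⟶ K := kernel.ι _ with hιdef
  have hιcond : ι ≫ k ≫ biprod.fst = 0 := kernel.condition _
  have hε : (𝟙 K - (k ≫ biprod.fst) ≫ u₁) ≫ (k ≫ biprod.fst) = 0 := by
    simp only [Preadditive.sub_comp, Category.id_comp, Category.assoc]
    rw [← Category.assoc u₁ k, hu₁]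
    simp
  set ρ : K ⟶ kernel (k ≫ biprod.fst) := kernel.lift _ _ hε with hρdef
  have hρι : ρ ≫ ι = 𝟙 K - (k ≫ biprod.fst) ≫ u₁ := kernel.lift_ι _ _ _
  have hιρ : ι ≫ ρ = 𝟙 _ := by
    rw [← cancel_mono ι, Category.assoc, hρι]
    simp only [Preadditive.comp_sub, Category.comp_id, Category.id_comp]
    rw [← Category.assoc, hιcond]
    simp
  have hu₁ρ : u₁ ≫ ρ = 0 := by
    rw [← cancel_mono ι, Category.assoc, hρι]
    simp only [Preadditive.comp_sub, Category.comp_id, zero_comp]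
    rw [← Category.assoc, ← Category.assoc, hu₁]
    simp
  set ν : kernel (k ≫ biprod.fst) ⟶ Y := ι ≫ k ≫ biprod.snd with hνdef
  have hksnd : k ≫ (biprod.snd : X ⊞ Y ⟶ Y) = ρ ≫ ν := by
    have htot : (k ≫ biprod.fst) ≫ u₁ + ρ ≫ ι = 𝟙 K := by rw [hρι]; abel
    calc k ≫ (biprod.snd : X ⊞ Y ⟶ Y)
        = ((k ≫ biprod.fst) ≫ u₁ + ρ ≫ ι) ≫ (k ≫ biprod.snd) := by rw [htot]; simp
      _ = (k ≫ biprod.fst) ≫ (u₁ ≫ k) ≫ biprod.snd + ρ ≫ ν := by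
          simp [Preadditive.add_comp, hνdef]
      _ = ρ ≫ ν := by rw [hu₁]; simp
  obtain ⟨S', hS', φ, eN, hφτ₁, hφτ₃, hPO⟩ := E.pushout_ex _ memk _ ρ
  -- hPO : IsPushout k φ.τ₁ φ.τ₂ S'.f
  have hinlφ : (biprod.inl : X ⟶ X ⊞ Y) ≫ φ.τ₂ = 0 := by
    rw [← hu₁, Category.assoc, hPO.w, hφτ₁]
    rw [← Category.assoc, ← Category.assoc, Category.assoc u₁ ρ eN.hom, ← Category.assoc u₁,
      hu₁ρ]
    simp
  set θ : Y ⟶ S'.X₂ := biprod.inr ≫ φ.τ₂ with hθdef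
  have hsndθ : (biprod.snd : X ⊞ Y ⟶ Y) ≫ θ = φ.τ₂ := by
    have : (𝟙 (X ⊞ Y)) ≫ φ.τ₂ = φ.τ₂ := by simp
    rw [← this, ← biprod.total, Preadditive.add_comp, Category.assoc, Category.assoc,
      hinlφ, comp_zero, zero_add, hθdef]
  have hνθ : ν ≫ θ = eN.hom ≫ S'.f := by
    have h1 : k ≫ (biprod.snd ≫ biprod.inr : X ⊞ Y ⟶ X ⊞ Y) ≫ φ.τ₂
        = k ≫ φ.τ₂ - (k ≫ biprod.fst) ≫ biprod.inl ≫ φ.τ₂ := by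
      have : (biprod.snd ≫ biprod.inr : X ⊞ Y ⟶ X ⊞ Y)
          = 𝟙 _ - biprod.fst ≫ biprod.inl := by rw [← biprod.total]; abel
      rw [this]
      simp [Preadditive.sub_comp, Preadditive.comp_sub]
    calc ν ≫ θ = ι ≫ k ≫ (biprod.snd ≫ biprod.inr) ≫ φ.τ₂ := by
          simp [hνdef, hθdef]
      _ = ι ≫ (k ≫ φ.τ₂ - (k ≫ biprod.fst) ≫ biprod.inl ≫ φ.τ₂) := by rw [h1]
      _ = ι ≫ k ≫ φ.τ₂ - (ι ≫ k ≫ biprod.fst) ≫ biprod.inl ≫ φ.τ₂ := by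
          simp [Preadditive.comp_sub]
      _ = ι ≫ k ≫ φ.τ₂ := by rw [hιcond]; simp
      _ = ι ≫ φ.τ₁ ≫ S'.f := by rw [hPO.w]
      _ = (ι ≫ ρ) ≫ eN.hom ≫ S'.f := by rw [hφτ₁]; simp
      _ = eN.hom ≫ S'.f := by rw [hιρ]; simp
  haveI hρepi : Epi ρ := ⟨fun a b hab => by
    rw [← Category.id_comp a, ← Category.id_comp b, ← hιρ, Category.assoc, Category.assoc, hab]⟩
  haveI hφτ₁epi : Epi φ.τ₁ := by
    rw [hφτ₁]; exact epi_comp _ _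
  haveI hφτ₂epi : Epi φ.τ₂ := ⟨fun a b hab => by
    apply hPO.hom_ext hab
    have h1 : φ.τ₁ ≫ S'.f ≫ a = φ.τ₁ ≫ S'.f ≫ b := by
      rw [← Category.assoc, ← hPO.w, Category.assoc, hab, ← Category.assoc, hPO.w,
        Category.assoc]
    exact (cancel_epi φ.τ₁).1 (by simpa using h1)⟩
  have wν : ν ≫ g = 0 := by
    rw [hνdef, Category.assoc, Category.assoc, wk, comp_zero]
  have hw' : k ≫ biprod.snd = φ.τ₁ ≫ (eN.inv ≫ ν) := by
    rw [hφτ₁, hksnd]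
    simp
  set θ' : S'.X₂ ⟶ Y := hPO.desc biprod.snd (eN.inv ≫ ν) hw' with hθ'def
  have hθ'1 : φ.τ₂ ≫ θ' = biprod.snd := hPO.inl_desc _ _ _
  have hθ'2 : S'.f ≫ θ' = eN.inv ≫ ν := hPO.inr_desc _ _ _
  have hθθ' : θ ≫ θ' = 𝟙 Y := by
    rw [hθdef, Category.assoc, hθ'1]
    simp
  have hθ'θ : θ' ≫ θ = 𝟙 _ := by
    apply hPO.hom_ext
    · rw [← Category.assoc, hθ'1, hsndθ, Category.comp_id]
    · rw [← Category.assoc, hθ'2, Category.assoc, hνθ, Category.comp_id]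
      simp
  have hcomm : θ' ≫ g = S'.g ≫ inv φ.τ₃ := by
    rw [← cancel_epi φ.τ₂, ← Category.assoc, hθ'1, ← Category.assoc, φ.comm₂₃]
    show (biprod.snd : X ⊞ Y ⟶ Y) ≫ g = ((ShortComplex.mk k (biprod.snd ≫ g) wk).g ≫ φ.τ₃) ≫ inv φ.τ₃
    simp
  refine ⟨_, ν, wν, E.iso_closed S' hS' _ ?_⟩
  exact ShortComplex.isoMk eN.symm (⟨θ', θ, hθ'θ, hθθ'⟩ : S'.X₂ ≅ Y) (asIso φ.τ₃).symm
    (by simpa using hθ'2.symm) (by simpa using hcomm)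

end ExactStructure

end Aux

variable {A : Type u} [Category.{v} A] [Preadditive A] [HasBinaryBiproducts A]
variable {B : Type u'} [Category.{v'} B] [Preadditive B] [HasBinaryBiproducts B]

/-- `B` is weakly idempotent complete if every retraction has a kernel. -/
def WeaklyIdemComplete (B : Type u') [Category.{v'} B] [Preadditive B] : Prop :=
  ∀ ⦃X Y : B⦄ (r : X ⟶ Y) (s : Y ⟶ X), s ≫ r = 𝟙 Y → HasKernel r

/-- A functor `f : A → B` between exact categories is left exact if for every admissible
short exact sequence `X ↣ Y ↠ Z` of `A`, the morphism `f Y ⟶ f Z` factors as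
`f Y ↠ I ↣ f Z` with `I ↣ f Z` monic and `f X ↣ f Y ↠ I` admissible exact in `B`
(the notion dual to right exactness). -/
def LeftExactOn (EA : ExactStructure A) (EB : ExactStructure B) (f : A ⥤ B) : Prop :=
  ∀ S ∈ EA.sequences,
    ∃ (I : B) (e : f.obj S.X₂ ⟶ I) (m : I ⟶ f.obj S.X₃) (w : f.map S.f ≫ e = 0),
      f.map S.g = e ≫ m ∧ Mono m ∧ ShortComplex.mk (f.map S.f) e w ∈ EB.sequences

/-- The class `S_f` of admissible short exact sequences `η` of `A` with `f(η)` admissible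
exact in `B`. -/
def Sf (EA : ExactStructure A) (EB : ExactStructure B) (f : A ⥤ B) : Set (ShortComplex A) :=
  {S | S ∈ EA.sequences ∧
    ∃ w : f.map S.f ≫ f.map S.g = 0,
      ShortComplex.mk (f.map S.f) (f.map S.g) w ∈ EB.sequences}

section FunctorAux

variable (EA : ExactStructure A) (EB : ExactStructure B) (f : A ⥤ B)

lemma fmap_zero (hf : LeftExactOn EA EB f) (X Y : A) : f.map (0 : X ⟶ Y) = 0 := by
  obtain ⟨I, e, m, w, hg, hm, hmem⟩ := hf _ (EA.split_mem X Y)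
  have h0 : (0 : X ⟶ Y) = (biprod.inl : X ⟶ X ⊞ Y) ≫ biprod.snd := by simp
  rw [h0, f.map_comp]
  show f.map (ShortComplex.mk (biprod.inl : X ⟶ X ⊞ Y) (biprod.snd : X ⊞ Y ⟶ Y)
    (by simp)).f ≫ f.map (biprod.snd : X ⊞ Y ⟶ Y) = 0
  rw [hg, ← Category.assoc, w, zero_comp]

lemma split_mem_fst (hf : LeftExactOn EA EB f) (X Y : A)
    (w₀ : f.map (biprod.inl : X ⟶ X ⊞ Y) ≫ f.map (biprod.snd : X ⊞ Y ⟶ Y) = 0) :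
    ShortComplex.mk (f.map (biprod.inl : X ⟶ X ⊞ Y)) (f.map (biprod.snd : X ⊞ Y ⟶ Y)) w₀
      ∈ EB.sequences := by
  obtain ⟨I, e, m, w, hg, hm, hmem⟩ := hf _ (EA.split_mem X Y)
  haveI : Mono m := hm
  haveI : IsSplitEpi m := ⟨⟨⟨f.map (biprod.inr : Y ⟶ X ⊞ Y) ≫ e, by
    rw [Category.assoc, ← hg, ← f.map_comp]
    show f.map ((biprod.inr : Y ⟶ X ⊞ Y) ≫ biprod.snd) = 𝟙 _
    rw [biprod.inr_snd, f.map_id]⟩⟩⟩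
  haveI : IsIso m := isIso_of_mono_of_isSplitEpi m
  refine EB.iso_closed _ hmem _ ?_
  exact ShortComplex.isoMk (Iso.refl _) (Iso.refl _) (asIso m) (by simp)
    (by simpa using hg)

lemma split_mem_snd (hf : LeftExactOn EA EB f) (X Y : A)
    (w₀ : f.map (biprod.inr : Y ⟶ X ⊞ Y) ≫ f.map (biprod.fst : X ⊞ Y ⟶ X) = 0) :
    ShortComplex.mk (f.map (biprod.inr : Y ⟶ X ⊞ Y)) (f.map (biprod.fst : X ⊞ Y ⟶ X)) w₀
      ∈ EB.sequences := by
  have hmemA : ShortComplex.mk (biprod.inr : Y ⟶ X ⊞ Y) (biprod.fst : X ⊞ Y ⟶ X)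
      (by simp) ∈ EA.sequences := by
    refine EA.iso_closed _ (EA.split_mem Y X) _ ?_
    exact ShortComplex.isoMk (Iso.refl _) (biprod.braiding Y X) (Iso.refl _)
      (by apply biprod.hom_ext <;> simp [biprod.braiding])
      (by simp [biprod.braiding])
  obtain ⟨I, e, m, w, hg, hm, hmem⟩ := hf _ hmemA
  haveI : Mono m := hm
  haveI : IsSplitEpi m := ⟨⟨⟨f.map (biprod.inl : X ⟶ X ⊞ Y) ≫ e, by
    rw [Category.assoc, ← hg, ← f.map_comp]
    show f.map ((biprod.inl : X ⟶ X ⊞ Y) ≫ biprod.fst) = 𝟙 _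
    rw [biprod.inl_fst, f.map_id]⟩⟩⟩
  haveI : IsIso m := isIso_of_mono_of_isSplitEpi m
  refine EB.iso_closed _ hmem _ ?_
  exact ShortComplex.isoMk (Iso.refl _) (Iso.refl _) (asIso m) (by simp)
    (by simpa using hg)

lemma ftotal (hf : LeftExactOn EA EB f) (X Y : A) :
    f.map (biprod.fst : X ⊞ Y ⟶ X) ≫ f.map (biprod.inl : X ⟶ X ⊞ Y)
      + f.map (biprod.snd : X ⊞ Y ⟶ Y) ≫ f.map (biprod.inr : Y ⟶ X ⊞ Y)
      = 𝟙 (f.obj (X ⊞ Y)) := by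
  have hif : f.map (biprod.inl : X ⟶ X ⊞ Y) ≫ f.map (biprod.fst : X ⊞ Y ⟶ X) = 𝟙 _ := by
    rw [← f.map_comp, biprod.inl_fst, f.map_id]
  have his : f.map (biprod.inl : X ⟶ X ⊞ Y) ≫ f.map (biprod.snd : X ⊞ Y ⟶ Y) = 0 := by
    rw [← f.map_comp, biprod.inl_snd, fmap_zero EA EB f hf]
  have hrf : f.map (biprod.inr : Y ⟶ X ⊞ Y) ≫ f.map (biprod.fst : X ⊞ Y ⟶ X) = 0 := by
    rw [← f.map_comp, biprod.inr_fst, fmap_zero EA EB f hf]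
  have hrs : f.map (biprod.inr : Y ⟶ X ⊞ Y) ≫ f.map (biprod.snd : X ⊞ Y ⟶ Y) = 𝟙 _ := by
    rw [← f.map_comp, biprod.inr_snd, f.map_id]
  set η : f.obj (X ⊞ Y) ⟶ f.obj (X ⊞ Y) :=
    𝟙 (f.obj (X ⊞ Y)) - f.map biprod.fst ≫ f.map biprod.inl
      - f.map biprod.snd ≫ f.map biprod.inr with hη
  have hηs : η ≫ f.map (biprod.snd : X ⊞ Y ⟶ Y) = 0 := by
    rw [hη]
    simp only [Preadditive.sub_comp, Category.id_comp, Category.assoc, his, hrs,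
      comp_zero, Category.comp_id]
    abel
  obtain ⟨hk⟩ := EB.isKernel _ (split_mem_fst EA EB f hf X Y
    (by rw [← f.map_comp, biprod.inl_snd, fmap_zero EA EB f hf]))
  obtain ⟨η₀', hη₀'⟩ := KernelFork.IsLimit.lift' hk η hηs
  simp only [Fork.ι_ofι] at hη₀'
  let η₀ : f.obj (X ⊞ Y) ⟶ f.obj X := η₀'
  have hη₀ : η₀ ≫ f.map (biprod.inl : X ⟶ X ⊞ Y) = η := hη₀'
  have hη0 : η = 0 := by
    have h1 : η₀ ≫ (f.map (biprod.inl : X ⟶ X ⊞ Y) ≫ f.map (biprod.fst : X ⊞ Y ⟶ X)) = 0 := by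
      rw [← Category.assoc, hη₀, hη]
      simp only [Preadditive.sub_comp, Category.id_comp, Category.assoc, hif, hrf,
        comp_zero, Category.comp_id]
      abel
    rw [hif, Category.comp_id] at h1
    rw [← hη₀, h1, zero_comp]
  rw [hη] at hη0
  have h2 : 𝟙 (f.obj (X ⊞ Y)) - (f.map (biprod.fst : X ⊞ Y ⟶ X) ≫ f.map biprod.inl
      + f.map (biprod.snd : X ⊞ Y ⟶ Y) ≫ f.map biprod.inr) = 0 := by
    rw [← sub_sub]; exact hη0
  rw [sub_eq_zero] at h2
  exact h2.symm

lemma fAdditive (hf : LeftExactOn EA EB f) : f.Additive := by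
  constructor
  intro X Y g h
  have hdesc : ∀ (u v : X ⟶ Y),
      f.map (biprod.lift u v) ≫ biprod.lift (f.map biprod.fst) (f.map biprod.snd)
        = biprod.lift (f.map u) (f.map v) := by
    intro u v
    apply biprod.hom_ext <;> simp [← f.map_comp]
  have hΓ : biprod.lift (f.map (biprod.fst : Y ⊞ Y ⟶ Y)) (f.map (biprod.snd : Y ⊞ Y ⟶ Y)) ≫
      biprod.desc (f.map biprod.inl) (f.map biprod.inr) = 𝟙 _ := by
    rw [biprod.lift_desc, ftotal EA EB f hf]
  have hdesc2 : biprod.desc (f.map (biprod.inl : Y ⟶ Y ⊞ Y)) (f.map biprod.inr)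
      ≫ f.map (biprod.desc (𝟙 Y) (𝟙 Y)) = biprod.desc (𝟙 (f.obj Y)) (𝟙 (f.obj Y)) := by
    apply biprod.hom_ext' <;> simp [← f.map_comp]
  have hsum : g + h = biprod.lift g h ≫ biprod.desc (𝟙 Y) (𝟙 Y) := by
    rw [biprod.lift_desc]; simp
  rw [hsum, f.map_comp]
  calc f.map (biprod.lift g h) ≫ f.map (biprod.desc (𝟙 Y) (𝟙 Y))
      = f.map (biprod.lift g h) ≫ (biprod.lift (f.map biprod.fst) (f.map biprod.snd)
          ≫ biprod.desc (f.map biprod.inl) (f.map biprod.inr))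
        ≫ f.map (biprod.desc (𝟙 Y) (𝟙 Y)) := by rw [hΓ]; simp
    _ = (f.map (biprod.lift g h) ≫ biprod.lift (f.map biprod.fst) (f.map biprod.snd))
          ≫ (biprod.desc (f.map biprod.inl) (f.map biprod.inr)
            ≫ f.map (biprod.desc (𝟙 Y) (𝟙 Y))) := by simp only [Category.assoc]
    _ = biprod.lift (f.map g) (f.map h) ≫ biprod.desc (𝟙 (f.obj Y)) (𝟙 (f.obj Y)) := by
          rw [hdesc, hdesc2]
    _ = f.map g + f.map h := by rw [biprod.lift_desc]; simp

lemma Sf_defl {S : ShortComplex A} (hS : S ∈ Sf EA EB f) : EB.IsDefl (f.map S.g) := by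
  obtain ⟨hSA, w, hmem⟩ := hS
  exact ⟨_, f.map S.f, w, hmem⟩

lemma mem_Sf (hB : WeaklyIdemComplete B) (hf : LeftExactOn EA EB f)
    {S : ShortComplex A} (hSA : S ∈ EA.sequences) (hg : EB.IsDefl (f.map S.g)) :
    S ∈ Sf EA EB f := by
  obtain ⟨I, e, m, w, hfac, hm, hmem⟩ := hf _ hSA
  haveI : Mono m := hm
  have hdm : EB.IsDefl m := by
    refine EB.isDefl_of_comp_isDefl (fun _ _ r s hrs => hB r s hrs) e m ?_
    rw [← hfac]; exact hg
  haveI : IsIso m := EB.isIso_of_mono_of_isDefl m hdm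
  refine ⟨hSA, by rw [hfac, ← Category.assoc, w, zero_comp], ?_⟩
  refine EB.iso_closed _ hmem _ ?_
  exact ShortComplex.isoMk (Iso.refl _) (Iso.refl _) (asIso m) (by simp)
    (by simpa using hfac)

end FunctorAux

/-- If `f : A → B` is a left exact functor between exact categories and `B` is weakly
idempotent complete, then `S_f` is an exact structure on `A`. -/
theorem Sf_exactStructure_of_leftExact
    (EA : ExactStructure A) (EB : ExactStructure B) (f : A ⥤ B)
    (hB : WeaklyIdemComplete B) (hf : LeftExactOn EA EB f) :
    ∃ ES : ExactStructure A, ES.sequences = Sf EA EB f := by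
  refine ⟨⟨Sf EA EB f, fun S hS => EA.isKernel S hS.1, fun S hS => EA.isCokernel S hS.1,
    ?_, ?_, ?_, ?_, ?_, ?_⟩, rfl⟩
  · -- iso_closed
    rintro S ⟨hSA, w, hmem⟩ S' iso
    refine ⟨EA.iso_closed S hSA S' iso, ?_, ?_⟩
    · rw [← f.map_comp, S'.zero, fmap_zero EA EB f hf]
    · refine EB.iso_closed _ hmem _ ?_
      refine ShortComplex.isoMk (f.mapIso (ShortComplex.π₁.mapIso iso))
        (f.mapIso (ShortComplex.π₂.mapIso iso)) (f.mapIso (ShortComplex.π₃.mapIso iso))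
        ?_ ?_
      · dsimp
        show f.map iso.hom.τ₁ ≫ f.map S'.f = f.map S.f ≫ f.map iso.hom.τ₂
        rw [← f.map_comp, ← f.map_comp, iso.hom.comm₁₂]
      · dsimp
        show f.map iso.hom.τ₂ ≫ f.map S'.g = f.map S.g ≫ f.map iso.hom.τ₃
        rw [← f.map_comp, ← f.map_comp, iso.hom.comm₂₃]
  · -- split_mem
    intro X Y
    refine mem_Sf EA EB f hB hf (EA.split_mem X Y) ?_
    exact ⟨_, f.map biprod.inl, _, split_mem_fst EA EB f hf X Y
      (by rw [← f.map_comp, biprod.inl_snd, fmap_zero EA EB f hf])⟩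
  · -- infl_comp
    rintro X Y Z i₁ i₂ ⟨W₁, q₁, w₁, hσ₁⟩ ⟨W₂, q₂, w₂, hσ₂⟩
    haveI : f.Additive := fAdditive EA EB f hf
    obtain ⟨hσ₁A, wb₁, hσ₁B⟩ := hσ₁
    obtain ⟨hσ₂A, wb₂, hσ₂B⟩ := hσ₂
    obtain ⟨W, q, wq, hTA⟩ := EA.infl_comp i₁ i₂ ⟨W₁, q₁, w₁, hσ₁A⟩ ⟨W₂, q₂, w₂, hσ₂A⟩
    refine ⟨W, q, wq, ?_⟩
    obtain ⟨hcoT⟩ := EA.isCokernel _ hTA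
    obtain ⟨hcoσ₁⟩ := EA.isCokernel _ hσ₁A
    obtain ⟨π', hπ'⟩ := CokernelCofork.IsColimit.desc' hcoT q₂ (by
      show (i₁ ≫ i₂) ≫ q₂ = 0
      rw [Category.assoc, w₂, comp_zero])
    simp only [Cofork.π_ofπ] at hπ'
    let π : W ⟶ W₂ := π'
    have hπ : q ≫ π = q₂ := hπ'
    obtain ⟨κ', hκ'⟩ := CokernelCofork.IsColimit.desc' hcoσ₁ (i₂ ≫ q) (by
      rw [← Category.assoc]; exact wq)
    simp only [Cofork.π_ofπ] at hκ'
    let κA : W₁ ⟶ W := κ'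
    have hκ : q₁ ≫ κA = i₂ ≫ q := hκ'
    haveI hqepi : Epi q := EA.epi_g hTA
    haveI hq₁epi : Epi q₁ := EA.epi_g hσ₁A
    have wN : κA ≫ π = 0 := by
      rw [← cancel_epi q₁, ← Category.assoc, hκ, Category.assoc, hπ, w₂, comp_zero]
    -- the Noether sequence W₁ ↣ W ↠ W₂ is admissible exact, via the pushout axiom
    obtain ⟨Shat, hShat, ψA, eW, hψτ₁, hψτ₃iso, hPOA⟩ := EA.pushout_ex _ hσ₂A W₁ q₁
    haveI : IsIso ψA.τ₃ := hψτ₃iso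
    obtain ⟨θ0, hθ0⟩ := CokernelCofork.IsColimit.desc' hcoT ψA.τ₂ (by
      show (i₁ ≫ i₂) ≫ ψA.τ₂ = 0
      rw [Category.assoc, hPOA.w, hψτ₁]
      rw [← Category.assoc, ← Category.assoc, w₁, zero_comp, zero_comp])
    simp only [Cofork.π_ofπ] at hθ0
    let θ : W ⟶ Shat.X₂ := θ0
    have hθ : q ≫ θ = ψA.τ₂ := hθ0
    have hκθ : κA ≫ θ = eW.hom ≫ Shat.f := by
      rw [← cancel_epi q₁, ← Category.assoc, hκ, Category.assoc, hθ, hPOA.w, hψτ₁,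
        Category.assoc]
    have hwPO : i₂ ≫ q = ψA.τ₁ ≫ (eW.inv ≫ κA) := by
      rw [hψτ₁, Category.assoc, eW.hom_inv_id_assoc, hκ]
    set θ' : Shat.X₂ ⟶ W := hPOA.desc q (eW.inv ≫ κA) hwPO with hθ'def
    have hθ'1 : ψA.τ₂ ≫ θ' = q := hPOA.inl_desc _ _ _
    have hθ'2 : Shat.f ≫ θ' = eW.inv ≫ κA := hPOA.inr_desc _ _ _
    haveI : Epi ψA.τ₁ := by rw [hψτ₁]; exact epi_comp _ _
    haveI : Epi ψA.τ₂ := ⟨fun a b hab => by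
      apply hPOA.hom_ext hab
      have h1 : ψA.τ₁ ≫ Shat.f ≫ a = ψA.τ₁ ≫ Shat.f ≫ b := by
        rw [← Category.assoc, ← hPOA.w, Category.assoc, hab, ← Category.assoc, hPOA.w,
          Category.assoc]
      exact (cancel_epi ψA.τ₁).1 h1⟩
    have hθθ' : θ ≫ θ' = 𝟙 W := by
      rw [← cancel_epi q, ← Category.assoc, hθ, hθ'1, Category.comp_id]
    have hθ'θ : θ' ≫ θ = 𝟙 _ := by
      apply hPOA.hom_ext
      · rw [← Category.assoc, hθ'1, hθ, Category.comp_id]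
      · rw [← Category.assoc, hθ'2, Category.assoc, hκθ, eW.inv_hom_id_assoc,
          Category.comp_id]
    have hcommN : θ' ≫ π = Shat.g ≫ inv ψA.τ₃ := by
      rw [← cancel_epi ψA.τ₂, ← Category.assoc, hθ'1, hπ, ← Category.assoc, ψA.comm₂₃]
      simp
    have hNmemA : ShortComplex.mk κA π wN ∈ EA.sequences := by
      refine EA.iso_closed _ hShat _ ?_
      exact ShortComplex.isoMk eW.symm (Iso.mk θ' θ hθ'θ hθθ') (asIso ψA.τ₃).symm
        (by simpa using hθ'2.symm) (by simpa using hcommN)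
    have hfq₂ : EB.IsDefl (f.map q₂) := ⟨_, f.map i₂, wb₂, hσ₂B⟩
    have hfπ : EB.IsDefl (f.map π) := by
      refine EB.isDefl_of_comp_isDefl (fun _ _ r s hrs => hB r s hrs) (f.map q) _ ?_
      rw [← f.map_comp, hπ]
      exact hfq₂
    have hNS : ShortComplex.mk κA π wN ∈ Sf EA EB f := mem_Sf EA EB f hB hf hNmemA hfπ
    obtain ⟨wNB, hNB⟩ := hNS.2
    obtain ⟨hkNB⟩ := EB.isKernel _ hNB
    -- the B-side
    obtain ⟨I, e, m, we, hfacT, hmT, heT⟩ := hf _ hTA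
    haveI : Mono m := hmT
    have hfacT' : f.map q = e ≫ m := hfacT
    have we' : f.map (i₁ ≫ i₂) ≫ e = 0 := we
    obtain ⟨hcoσ₁B⟩ := EB.isCokernel _ hσ₁B
    haveI hfq₁epi : Epi (f.map q₁) := EB.epi_g hσ₁B
    obtain ⟨j, hj'⟩ := CokernelCofork.IsColimit.desc' hcoσ₁B (f.map i₂ ≫ e) (by
      show f.map i₁ ≫ f.map i₂ ≫ e = 0
      rw [← Category.assoc, ← f.map_comp]
      exact we')
    simp only [Cofork.π_ofπ] at hj'
    have hj : f.map q₁ ≫ j = f.map i₂ ≫ e := hj'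
    have hjm : j ≫ m = f.map κA := by
      rw [← cancel_epi (f.map q₁), ← Category.assoc, hj, Category.assoc, ← hfacT',
        ← f.map_comp, ← hκ, f.map_comp]
    -- pull back the image of σ₂ along f.map π
    obtain ⟨Sb, hSb2, ψB, eb2, hψBτ₃, hψBτ₁, hpbB2⟩ :=
      EB.pullback_ex _ hσ₂B (f.obj W) (f.map π)
    have hwz : (f.map q ≫ eb2.inv) ≫ ψB.τ₃ = 𝟙 (f.obj Z) ≫ f.map q₂ := by
      rw [hψBτ₃, Category.assoc, eb2.inv_hom_id_assoc, ← f.map_comp, hπ, Category.id_comp]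
    set zhat : f.obj Z ⟶ Sb.X₂ := hpbB2.lift (f.map q ≫ eb2.inv) (𝟙 _) hwz with hzdef
    have hz1 : zhat ≫ Sb.g = f.map q ≫ eb2.inv := hpbB2.lift_fst _ _ _
    have hz2 : zhat ≫ ψB.τ₂ = 𝟙 _ := hpbB2.lift_snd _ _ _
    haveI hker : HasKernel ψB.τ₂ := hB ψB.τ₂ zhat hz2
    set k₀ : kernel ψB.τ₂ ⟶ Sb.X₂ := kernel.ι _ with hk₀def
    have hk₀cond : k₀ ≫ ψB.τ₂ = 0 := kernel.condition _
    have hεz : (𝟙 Sb.X₂ - ψB.τ₂ ≫ zhat) ≫ ψB.τ₂ = 0 := by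
      rw [Preadditive.sub_comp, Category.id_comp, Category.assoc, hz2, Category.comp_id,
        sub_self]
    set ρ₁ : Sb.X₂ ⟶ kernel ψB.τ₂ := kernel.lift _ _ hεz with hρ₁def
    have hρ₁ : ρ₁ ≫ k₀ = 𝟙 Sb.X₂ - ψB.τ₂ ≫ zhat := kernel.lift_ι _ _ _
    have hk₀ρ₁ : k₀ ≫ ρ₁ = 𝟙 _ := by
      rw [← cancel_mono k₀, Category.assoc, hρ₁, Preadditive.comp_sub, Category.comp_id,
        Category.id_comp, ← Category.assoc, hk₀cond, zero_comp, sub_zero]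
    have hzρ₁ : zhat ≫ ρ₁ = 0 := by
      rw [← cancel_mono k₀, Category.assoc, hρ₁, Preadditive.comp_sub, Category.comp_id,
        ← Category.assoc, hz2, Category.id_comp, sub_self, zero_comp]
    set Λ : kernel ψB.τ₂ ⊞ f.obj Z ⟶ Sb.X₂ := biprod.desc k₀ zhat with hΛdef
    haveI : IsIso Λ := by
      refine ⟨biprod.lift ρ₁ ψB.τ₂, ?_, ?_⟩
      · rw [hΛdef]
        apply biprod.hom_ext' <;> apply biprod.hom_ext <;>
          simp [hk₀ρ₁, hzρ₁, hz2, hk₀cond]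
      · rw [hΛdef, biprod.lift_desc, hρ₁]
        abel
    have hk₀w : (k₀ ≫ Sb.g ≫ eb2.hom) ≫ f.map π = 0 := by
      rw [Category.assoc, Category.assoc, ← hψBτ₃, hpbB2.w, ← Category.assoc,
        hk₀cond, zero_comp]
    obtain ⟨y, hy'⟩ := KernelFork.IsLimit.lift' hkNB (k₀ ≫ Sb.g ≫ eb2.hom) hk₀w
    simp only [Fork.ι_ofι] at hy'
    have hy : y ≫ f.map κA = k₀ ≫ Sb.g ≫ eb2.hom := hy'
    have hcomp1 : k₀ ≫ (Sb.g ≫ eb2.hom) = (y ≫ j) ≫ m := by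
      rw [Category.assoc y j m, hjm, hy]
    have hcomp2 : zhat ≫ (Sb.g ≫ eb2.hom) = e ≫ m := by
      rw [← Category.assoc, hz1, Category.assoc, eb2.inv_hom_id, Category.comp_id, hfacT']
    have hΛprW : Λ ≫ (Sb.g ≫ eb2.hom) = biprod.desc (y ≫ j) e ≫ m := by
      rw [hΛdef]
      apply biprod.hom_ext'
      · simp only [← Category.assoc, biprod.inl_desc]
        rw [Category.assoc]
        exact hcomp1
      · simp only [← Category.assoc, biprod.inr_desc]
        rw [Category.assoc]
        exact hcomp2
    have hdeflΛ : EB.IsDefl (Λ ≫ (Sb.g ≫ eb2.hom)) :=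
      ((EB.mem_defl hSb2).comp_isIso eb2.hom).isIso_comp Λ
    rw [hΛprW] at hdeflΛ
    have hm : EB.IsDefl m :=
      EB.isDefl_of_comp_isDefl (fun _ _ r s hrs => hB r s hrs) _ m hdeflΛ
    have hfq : EB.IsDefl (f.map q) := by
      rw [hfacT']
      exact ExactStructure.IsDefl.comp (⟨_, f.map (i₁ ≫ i₂), we', heT⟩ : EB.IsDefl e) hm
    exact mem_Sf EA EB f hB hf hTA hfq
  · -- defl_comp
    rintro X Y Z g₁ g₂ ⟨K₁, i₁, w₁, hσ₁⟩ ⟨K₂, i₂, w₂, hσ₂⟩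
    obtain ⟨K, i, w, hmem⟩ := EA.defl_comp g₁ g₂ ⟨K₁, i₁, w₁, hσ₁.1⟩ ⟨K₂, i₂, w₂, hσ₂.1⟩
    refine ⟨K, i, w, mem_Sf EA EB f hB hf hmem ?_⟩
    show EB.IsDefl (f.map (g₁ ≫ g₂))
    rw [f.map_comp]
    exact (Sf_defl EA EB f hσ₁).comp (Sf_defl EA EB f hσ₂)
  · -- pushout_ex
    intro S hS A₀ a
    obtain ⟨S', hS', φ, e₁, h1, h2, h3⟩ := EA.pushout_ex S hS.1 A₀ a
    refine ⟨S', ?_, φ, e₁, h1, h2, h3⟩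
    refine mem_Sf EA EB f hB hf hS' ?_
    refine EB.isDefl_of_comp_isDefl (fun _ _ r s hrs => hB r s hrs) (f.map φ.τ₂) _ ?_
    have hcomm : f.map φ.τ₂ ≫ f.map S'.g = f.map S.g ≫ f.map φ.τ₃ := by
      rw [← f.map_comp, ← f.map_comp, φ.comm₂₃]
    rw [hcomm]
    haveI : IsIso φ.τ₃ := h2
    exact (Sf_defl EA EB f hS).comp_isIso (f.map φ.τ₃)
  · -- pullback_ex
    intro S hS A₀ c
    obtain ⟨hSA, wS, hSB⟩ := hS
    obtain ⟨S', hS', φ, e₃, hτ₃, hτ₁, hpb⟩ := EA.pullback_ex S hSA A₀ c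
    haveI : f.Additive := fAdditive EA EB f hf
    refine ⟨S', ?_, φ, e₃, hτ₃, hτ₁, hpb⟩
    refine mem_Sf EA EB f hB hf hS' ?_
    -- we must show that `f.map S'.g` is a deflation in `EB`
    set δ : A₀ ⊞ S.X₂ ⟶ S.X₃ := biprod.desc c (-S.g) with hδdef
    haveI : IsIso (-𝟙 (S.X₃)) := ⟨-𝟙 _, by simp, by simp⟩
    have hneg : EA.IsDefl (-S.g) := by
      have h1 : EA.IsDefl (S.g ≫ (-𝟙 S.X₃)) := (EA.mem_defl hSA).comp_isIso _
      rwa [Preadditive.comp_neg, Category.comp_id] at h1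
    have hδ : EA.IsDefl δ := EA.isDefl_desc' c hneg
    set κ : S'.X₂ ⟶ A₀ ⊞ S.X₂ := biprod.lift (S'.g ≫ e₃.hom) φ.τ₂ with hκdef
    have wκ : κ ≫ δ = 0 := by
      rw [hκdef, hδdef, biprod.lift_desc, Preadditive.comp_neg, Category.assoc, ← hτ₃,
        hpb.w]
      abel
    -- κ is a kernel of δ
    haveI hκmono : Mono κ := ⟨fun {T} a b hab => by
      have h1 : a ≫ κ ≫ biprod.fst = b ≫ κ ≫ biprod.fst := by rw [← Category.assoc, hab,
        Category.assoc]
      have h2 : a ≫ κ ≫ biprod.snd = b ≫ κ ≫ biprod.snd := by rw [← Category.assoc, hab,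
        Category.assoc]
      rw [hκdef] at h1 h2
      simp only [biprod.lift_fst, biprod.lift_snd] at h1 h2
      refine hpb.hom_ext ?_ (by simpa using h2)
      have := h1
      rw [← Category.assoc, ← Category.assoc] at this
      have h3 := (cancel_mono e₃.hom).1 this
      simpa using h3⟩
    have hexp : ∀ {T : A} (t : T ⟶ A₀ ⊞ S.X₂),
        t ≫ δ = t ≫ biprod.fst ≫ c - t ≫ biprod.snd ≫ S.g := by
      intro T t
      rw [hδdef]
      calc t ≫ biprod.desc c (-S.g)
          = (t ≫ (biprod.fst ≫ biprod.inl + biprod.snd ≫ biprod.inr))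
              ≫ biprod.desc c (-S.g) := by rw [biprod.total, Category.comp_id]
        _ = (t ≫ biprod.fst ≫ biprod.inl) ≫ biprod.desc c (-S.g)
            + (t ≫ biprod.snd ≫ biprod.inr) ≫ biprod.desc c (-S.g) := by
            rw [Preadditive.comp_add, Preadditive.add_comp]
        _ = t ≫ biprod.fst ≫ c - t ≫ biprod.snd ≫ S.g := by
            simp only [Category.assoc, biprod.inl_desc, biprod.inr_desc, Preadditive.comp_neg]
            abel
    have hκlim : IsLimit (KernelFork.ofι κ wκ) := by
      refine KernelFork.IsLimit.ofι' κ wκ (fun {T} t ht => ?_)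
      have heq : t ≫ biprod.fst ≫ c = t ≫ biprod.snd ≫ S.g := by
        rw [hexp t] at ht
        exact sub_eq_zero.1 ht
      have wlift : (t ≫ biprod.fst ≫ e₃.inv) ≫ φ.τ₃ = (t ≫ biprod.snd) ≫ S.g := by
        rw [hτ₃]
        simp only [Category.assoc, e₃.inv_hom_id_assoc]
        simpa using heq
      refine ⟨hpb.lift (t ≫ biprod.fst ≫ e₃.inv) (t ≫ biprod.snd) wlift, ?_⟩
      apply biprod.hom_ext
      · rw [Category.assoc, hκdef, biprod.lift_fst, ← Category.assoc, hpb.lift_fst]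
        simp
      · rw [Category.assoc, hκdef, biprod.lift_snd, hpb.lift_snd]
    obtain ⟨V, vi, wv, memV⟩ := hδ
    obtain ⟨hkV⟩ := EA.isKernel _ memV
    let e₁ : V ≅ S'.X₂ := IsLimit.conePointUniqueUpToIso hkV hκlim
    have he₁ : e₁.hom ≫ κ = vi := by
      simpa using IsLimit.conePointUniqueUpToIso_hom_comp hkV hκlim WalkingParallelPair.zero
    have Tmem : ShortComplex.mk κ δ wκ ∈ EA.sequences := by
      refine EA.iso_closed _ memV _ ?_
      exact ShortComplex.isoMk e₁ (Iso.refl _) (Iso.refl _) (by simpa using he₁) (by simp)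
    -- the image of this sequence under `f`
    set Γ : f.obj A₀ ⊞ f.obj S.X₂ ⟶ f.obj (A₀ ⊞ S.X₂) :=
      biprod.desc (f.map biprod.inl) (f.map biprod.inr) with hΓdef
    set Γ' : f.obj (A₀ ⊞ S.X₂) ⟶ f.obj A₀ ⊞ f.obj S.X₂ :=
      biprod.lift (f.map biprod.fst) (f.map biprod.snd) with hΓ'def
    have hΓΓ' : Γ ≫ Γ' = 𝟙 _ := by
      rw [hΓdef, hΓ'def]
      apply biprod.hom_ext' <;> apply biprod.hom_ext <;>
        simp [← f.map_comp, fmap_zero EA EB f hf]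
    have hΓ'Γ : Γ' ≫ Γ = 𝟙 _ := by
      rw [hΓdef, hΓ'def, biprod.lift_desc, ftotal EA EB f hf]
    haveI : IsIso Γ := ⟨Γ', hΓΓ', hΓ'Γ⟩
    haveI : IsIso Γ' := ⟨Γ, hΓ'Γ, hΓΓ'⟩
    have hΓδ : Γ ≫ f.map δ = biprod.desc (f.map c) (-(f.map S.g)) := by
      rw [hΓdef]
      apply biprod.hom_ext' <;> simp [← f.map_comp, hδdef, f.map_neg]
    have hfδdefl : EB.IsDefl (f.map δ) := by
      haveI : IsIso (-𝟙 (f.obj S.X₃)) := ⟨-𝟙 _, by simp, by simp⟩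
      have hnegB : EB.IsDefl (-(f.map S.g)) := by
        have h1 : EB.IsDefl (f.map S.g ≫ (-𝟙 (f.obj S.X₃))) :=
          (Sf_defl EA EB f ⟨hSA, wS, hSB⟩).comp_isIso _
        rwa [Preadditive.comp_neg, Category.comp_id] at h1
      have h2 : EB.IsDefl (Γ' ≫ biprod.desc (f.map c) (-(f.map S.g))) :=
        (EB.isDefl_desc' (f.map c) hnegB).isIso_comp Γ'
      have h3 : Γ' ≫ biprod.desc (f.map c) (-(f.map S.g)) = f.map δ := by
        rw [← hΓδ, ← Category.assoc, hΓ'Γ, Category.id_comp]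
      rwa [h3] at h2
    have TS : ShortComplex.mk κ δ wκ ∈ Sf EA EB f := mem_Sf EA EB f hB hf Tmem hfδdefl
    obtain ⟨wT, hTB⟩ := TS.2
    obtain ⟨hκlimB⟩ := EB.isKernel _ hTB
    haveI hκBmono : Mono (f.map κ) := EB.mono_f hTB
    -- pull back the image of S in B along f.map c
    obtain ⟨Sb, hSb, ψ, eb, hψτ₃, hψτ₁, hpbB⟩ := EB.pullback_ex _ hSB (f.obj A₀) (f.map c)
    have hw₁ : (f.map S'.g ≫ f.map e₃.hom ≫ eb.inv) ≫ ψ.τ₃ = f.map φ.τ₂ ≫ f.map S.g := by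
      rw [hψτ₃]
      simp only [Category.assoc, eb.inv_hom_id_assoc]
      simp only [← f.map_comp]
      congr 1
      rw [← hτ₃, hpb.w]
    set χ₁ : f.obj S'.X₂ ⟶ Sb.X₂ :=
      hpbB.lift (f.map S'.g ≫ f.map e₃.hom ≫ eb.inv) (f.map φ.τ₂) hw₁ with hχ₁def
    have hχ₁g : χ₁ ≫ Sb.g = f.map S'.g ≫ f.map e₃.hom ≫ eb.inv := hpbB.lift_fst _ _ _
    have hχ₁τ : χ₁ ≫ ψ.τ₂ = f.map φ.τ₂ := hpbB.lift_snd _ _ _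
    set W₀ : Sb.X₂ ⟶ f.obj (A₀ ⊞ S.X₂) := biprod.lift (Sb.g ≫ eb.hom) ψ.τ₂ ≫ Γ with hW₀def
    have hW₀δ : W₀ ≫ f.map δ = 0 := by
      rw [hW₀def, Category.assoc, hΓδ, biprod.lift_desc, Preadditive.comp_neg,
        Category.assoc, ← hψτ₃, hpbB.w]
      abel
    obtain ⟨χ₂', hχ₂'⟩ := KernelFork.IsLimit.lift' hκlimB W₀ hW₀δ
    simp only [Fork.ι_ofι] at hχ₂'
    let χ₂ : Sb.X₂ ⟶ f.obj S'.X₂ := χ₂'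
    have hχ₂ : χ₂ ≫ f.map κ = W₀ := hχ₂'
    have hκfst : f.map κ ≫ f.map (biprod.fst : A₀ ⊞ S.X₂ ⟶ A₀) = f.map (S'.g ≫ e₃.hom) := by
      rw [← f.map_comp, hκdef, biprod.lift_fst]
    have hκsnd : f.map κ ≫ f.map (biprod.snd : A₀ ⊞ S.X₂ ⟶ S.X₂) = f.map φ.τ₂ := by
      rw [← f.map_comp, hκdef, biprod.lift_snd]
    have hΓfst : Γ ≫ f.map (biprod.fst : A₀ ⊞ S.X₂ ⟶ A₀) = biprod.fst := by
      rw [hΓdef]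
      apply biprod.hom_ext' <;> simp [← f.map_comp, fmap_zero EA EB f hf]
    have hΓsnd : Γ ≫ f.map (biprod.snd : A₀ ⊞ S.X₂ ⟶ S.X₂) = biprod.snd := by
      rw [hΓdef]
      apply biprod.hom_ext' <;> simp [← f.map_comp, fmap_zero EA EB f hf]
    have hW₀fst : W₀ ≫ f.map (biprod.fst : A₀ ⊞ S.X₂ ⟶ A₀) = Sb.g ≫ eb.hom := by
      rw [hW₀def, Category.assoc, hΓfst, biprod.lift_fst]
    have hW₀snd : W₀ ≫ f.map (biprod.snd : A₀ ⊞ S.X₂ ⟶ S.X₂) = ψ.τ₂ := by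
      rw [hW₀def, Category.assoc, hΓsnd, biprod.lift_snd]
    have hχ₂χ₁ : χ₂ ≫ χ₁ = 𝟙 _ := by
      apply hpbB.hom_ext
      · rw [Category.assoc, hχ₁g, Category.id_comp]
        have h1 : χ₂ ≫ f.map S'.g ≫ f.map e₃.hom = Sb.g ≫ eb.hom := by
          rw [show f.map S'.g ≫ f.map e₃.hom = f.map κ ≫ f.map biprod.fst by
            rw [hκfst, f.map_comp], ← Category.assoc, hχ₂, hW₀fst]
        rw [show χ₂ ≫ f.map S'.g ≫ f.map e₃.hom ≫ eb.inv
            = (χ₂ ≫ f.map S'.g ≫ f.map e₃.hom) ≫ eb.inv by simp, h1]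
        simp
      · rw [Category.assoc, hχ₁τ, Category.id_comp, ← hκsnd, ← Category.assoc, hχ₂, hW₀snd]
    have hχ₁W₀ : χ₁ ≫ W₀ = f.map κ := by
      rw [← cancel_mono Γ']
      have hW₀Γ' : W₀ ≫ Γ' = biprod.lift (Sb.g ≫ eb.hom) ψ.τ₂ := by
        rw [hW₀def, Category.assoc, hΓΓ', Category.comp_id]
      rw [Category.assoc, hW₀Γ']
      apply biprod.hom_ext
      · rw [Category.assoc, biprod.lift_fst, hΓ'def, Category.assoc, biprod.lift_fst, hκfst,
          f.map_comp]
        rw [← Category.assoc, hχ₁g]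
        simp
      · rw [Category.assoc, biprod.lift_snd, hΓ'def, Category.assoc, biprod.lift_snd, hκsnd,
          hχ₁τ]
    have hχ₁χ₂ : χ₁ ≫ χ₂ = 𝟙 _ := by
      rw [← cancel_mono (f.map κ), Category.assoc, hχ₂, Category.id_comp, hχ₁W₀]
    haveI : IsIso χ₁ := ⟨χ₂, hχ₁χ₂, hχ₂χ₁⟩
    have hfinal : χ₁ ≫ ((Sb.g ≫ eb.hom) ≫ f.map e₃.inv) = f.map S'.g := by
      rw [← Category.assoc, ← Category.assoc, hχ₁g]
      simp only [Category.assoc, eb.inv_hom_id_assoc]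
      rw [← f.map_comp, e₃.hom_inv_id, f.map_id, Category.comp_id]
    have hdefl : EB.IsDefl (χ₁ ≫ ((Sb.g ≫ eb.hom) ≫ f.map e₃.inv)) :=
      (((EB.mem_defl hSb).comp_isIso eb.hom).comp_isIso (f.map e₃.inv)).isIso_comp χ₁
    rwa [hfinal] at hdefl
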